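/- For every real r with 0 < r < 1, we have r + 2^{1-r} - 2 < 0, and for every real r with r < 0 or r > 1, we have r + 2^{1-r} - 2 > 0. -/

import Mathlib

open Real Set

noncomputable def fAux : ℝ → ℝ := fun r => r + Real.exp ((1 - r) * Real.log 2) - 2

lemma fAux_hasDeriv (x : ℝ) :
    HasDerivAt fAux (1 + Real.exp ((1 - x) * Real.log 2) * (-1 * Real.log 2)) x := by
  have h1 : HasDerivAt (fun r : ℝ => 1 - r) (-1) x := (hasDerivAt_id x).const_sub 1
  have h2 := (h1.mul_const (Real.log 2)).exp
  exact ((hasDerivAt_id x).add h2).sub_const 2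

lemma fAux_strictConvex : StrictConvexOn ℝ (univ : Set ℝ) fAux := by
  have hc : ContinuousOn fAux univ := by
    unfold fAux; fun_prop
  apply strictConvexOn_of_deriv2_pos convex_univ hc
  intro x _
  have hd1 : deriv fAux = fun x => 1 + Real.exp ((1 - x) * Real.log 2) * (-1 * Real.log 2) := by
    funext y; exact (fAux_hasDeriv y).deriv
  have h1 : HasDerivAt (fun r : ℝ => 1 - r) (-1) x := (hasDerivAt_id x).const_sub 1
  have h2 := ((h1.mul_const (Real.log 2)).exp).mul_const (-1 * Real.log 2)
  have h3 : HasDerivAt (fun x => 1 + Real.exp ((1 - x) * Real.log 2) * (-1 * Real.log 2))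
      (Real.exp ((1 - x) * Real.log 2) * (-1 * Real.log 2) * (-1 * Real.log 2)) x :=
    by simpa using h2.const_add (1:ℝ)
  simp only [Function.iterate_succ, Function.iterate_zero, Function.comp_apply, id_eq]
  rw [hd1, h3.deriv]
  have := Real.exp_pos ((1 - x) * Real.log 2)
  have hl : (0:ℝ) < Real.log 2 := Real.log_pos (by norm_num)
  nlinarith [mul_pos this (mul_pos hl hl)]

lemma fAux_eq (r : ℝ) : fAux r = r + (2 : ℝ) ^ (1 - r) - 2 := by
  unfold fAux
  rw [Real.rpow_def_of_pos (by norm_num : (0:ℝ) < 2)]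
  ring_nf

lemma fAux_zero : fAux 0 = 0 := by
  unfold fAux; simp [Real.exp_log]

lemma fAux_one : fAux 1 = 0 := by
  unfold fAux; norm_num

theorem sign_of_r_add_two_rpow :
    (∀ r : ℝ, 0 < r → r < 1 → r + (2 : ℝ) ^ (1 - r) - 2 < 0) ∧
    (∀ r : ℝ, (r < 0 ∨ 1 < r) → 0 < r + (2 : ℝ) ^ (1 - r) - 2) := by
  constructor
  · intro r hr0 hr1
    rw [← fAux_eq]
    have := fAux_strictConvex.2 (mem_univ 0) (mem_univ 1) (by norm_num)
      (by linarith : (0:ℝ) < 1 - r) hr0 (by ring)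
    simp only [smul_eq_mul, mul_zero, mul_one, zero_add, fAux_zero, fAux_one] at this
    linarith
  · intro r hr
    rw [← fAux_eq]
    rcases hr with hr | hr
    · -- 0 = t • r + (1-t) • 1, t = 1/(1-r)
      set t : ℝ := 1 / (1 - r) with ht
      have h1r : (0:ℝ) < 1 - r := by linarith
      have ht0 : 0 < t := by positivity
      have ht1 : t < 1 := by
        rw [ht, div_lt_one h1r]; linarith
      have := fAux_strictConvex.2 (mem_univ r) (mem_univ 1) (by intro h; linarith)
        ht0 (by linarith : (0:ℝ) < 1 - t) (by ring)
      simp only [smul_eq_mul, mul_one, fAux_one, mul_zero, add_zero] at this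
      have hcomb : t * r + (1 - t) = 0 := by
        have h' : t * (1 - r) = 1 := by rw [ht]; exact one_div_mul_cancel h1r.ne'
        linarith
      rw [hcomb, fAux_zero] at this
      nlinarith
    · set t : ℝ := 1 / r with ht
      have hr0 : (0:ℝ) < r := by linarith
      have ht0 : 0 < t := by positivity
      have ht1 : t < 1 := by rw [ht, div_lt_one hr0]; linarith
      have := fAux_strictConvex.2 (mem_univ 0) (mem_univ r) (by intro h; linarith)
        (by linarith : (0:ℝ) < 1 - t) ht0 (by ring)
      simp only [smul_eq_mul, mul_zero, zero_add, fAux_zero, add_zero] at this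
      have hcomb : t * r = 1 := by rw [ht]; exact one_div_mul_cancel hr0.ne'
      rw [hcomb, fAux_one] at this
      nlinarith
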